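/- Define the coordinate Jacobi bracket of two differentiable functions f, g : ℝ³ → ℝ (in coordinates (q,p,s)) by {g,f} = (g·∂f/∂s − ∂g/∂s·f) + p(∂g/∂s·∂f/∂p − ∂g/∂p·∂f/∂s) + (∂g/∂q·∂f/∂p − ∂g/∂p·∂f/∂q). If f and g are affine in p, i.e. f(q,p,s) = a(q,s) + p·b(q,s) and g(q,p,s) = c(q,s) + p·d(q,s) for differentiable functions a,b,c,d : ℝ² → ℝ, then {g,f} is again affine in p: there exist functions u, v : ℝ² → ℝ such that {g,f}(q,p,s) = u(q,s) + p·v(q,s) for all (q,p,s) ∈ ℝ³. -/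

import Mathlib

lemma diffS_aux (e : ℝ × ℝ → ℝ) (he : Differentiable ℝ e) (q s : ℝ) :
    DifferentiableAt ℝ (fun s' => e (q, s')) s :=
  (he (q, s)).comp s ((differentiableAt_const q).prodMk differentiableAt_id)

lemma diffQ_aux (e : ℝ × ℝ → ℝ) (he : Differentiable ℝ e) (q s : ℝ) :
    DifferentiableAt ℝ (fun q' => e (q', s)) q :=
  (he (q, s)).comp q (differentiableAt_id.prodMk (differentiableAt_const s))

/-- the coordinate Jacobi bracket of two functions on ℝ³ that are affine
in p is again affine in p. -/
theorem jacobi_bracket_affine_in_p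
    (f g : ℝ × ℝ × ℝ → ℝ)
    (a b c d : ℝ × ℝ → ℝ)
    (ha : Differentiable ℝ a) (hb : Differentiable ℝ b)
    (hc : Differentiable ℝ c) (hd : Differentiable ℝ d)
    (hf : ∀ q p s : ℝ, f (q, p, s) = a (q, s) + p * b (q, s))
    (hg : ∀ q p s : ℝ, g (q, p, s) = c (q, s) + p * d (q, s))
    (br : ℝ × ℝ × ℝ → ℝ)
    (hbr : ∀ q p s : ℝ, br (q, p, s) =
      (g (q, p, s) * deriv (fun s' => f (q, p, s')) s
          - deriv (fun s' => g (q, p, s')) s * f (q, p, s))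
        + p * (deriv (fun s' => g (q, p, s')) s * deriv (fun p' => f (q, p', s)) p
          - deriv (fun p' => g (q, p', s)) p * deriv (fun s' => f (q, p, s')) s)
        + (deriv (fun q' => g (q', p, s)) q * deriv (fun p' => f (q, p', s)) p
          - deriv (fun p' => g (q, p', s)) p * deriv (fun q' => f (q', p, s)) q)) :
    ∃ u v : ℝ × ℝ → ℝ, ∀ q p s : ℝ, br (q, p, s) = u (q, s) + p * v (q, s) := by
  -- derivative in s
  have derS : ∀ (e e' : ℝ × ℝ → ℝ) (he : Differentiable ℝ e) (he' : Differentiable ℝ e')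
      (q p s : ℝ),
      deriv (fun s' => e (q, s') + p * e' (q, s')) s
        = deriv (fun s' => e (q, s')) s + p * deriv (fun s' => e' (q, s')) s := by
    intro e e' he he' q p s
    rw [deriv_fun_add (diffS_aux e he q s) ((diffS_aux e' he' q s).const_mul p),
      deriv_const_mul p (diffS_aux e' he' q s)]
  have derQ : ∀ (e e' : ℝ × ℝ → ℝ) (he : Differentiable ℝ e) (he' : Differentiable ℝ e')
      (q p s : ℝ),
      deriv (fun q' => e (q', s) + p * e' (q', s)) q
        = deriv (fun q' => e (q', s)) q + p * deriv (fun q' => e' (q', s)) q := by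
    intro e e' he he' q p s
    rw [deriv_fun_add (diffQ_aux e he q s) ((diffQ_aux e' he' q s).const_mul p),
      deriv_const_mul p (diffQ_aux e' he' q s)]
  have derP : ∀ (x y p : ℝ), deriv (fun p' => x + p' * y) p = y := by
    intro x y p
    have h := ((hasDerivAt_id p).mul_const y).const_add x
    simp only [one_mul] at h
    exact h.deriv
  refine ⟨fun x => c x * deriv (fun s' => a (x.1, s')) x.2
        - deriv (fun s' => c (x.1, s')) x.2 * a x
        + deriv (fun q' => c (q', x.2)) x.1 * b x
        - d x * deriv (fun q' => a (q', x.2)) x.1,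
      fun x => c x * deriv (fun s' => b (x.1, s')) x.2
        - deriv (fun s' => d (x.1, s')) x.2 * a x
        + deriv (fun q' => d (q', x.2)) x.1 * b x
        - d x * deriv (fun q' => b (q', x.2)) x.1, ?_⟩
  intro q p s
  have e1 : (fun s' => f (q, p, s')) = fun s' => a (q, s') + p * b (q, s') :=
    funext fun s' => hf q p s'
  have e2 : (fun s' => g (q, p, s')) = fun s' => c (q, s') + p * d (q, s') :=
    funext fun s' => hg q p s'
  have e3 : (fun p' => f (q, p', s)) = fun p' => a (q, s) + p' * b (q, s) :=
    funext fun p' => hf q p' s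
  have e4 : (fun p' => g (q, p', s)) = fun p' => c (q, s) + p' * d (q, s) :=
    funext fun p' => hg q p' s
  have e5 : (fun q' => f (q', p, s)) = fun q' => a (q', s) + p * b (q', s) :=
    funext fun q' => hf q' p s
  have e6 : (fun q' => g (q', p, s)) = fun q' => c (q', s) + p * d (q', s) :=
    funext fun q' => hg q' p s
  rw [hbr, hf, hg, e1, e2, e3, e4, e5, e6, derS a b ha hb, derS c d hc hd,
    derQ a b ha hb, derQ c d hc hd, derP, derP]
  ring
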